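/- Let p ≥ 1 and let x_1,…,x_n and A_{ij} (1 ≤ i ≤ m, 1 ≤ j ≤ n) be jointly independent, identically distributed real random variables with μ := E[|x_1|^p] and σ² := Var[|x_1|^p] both finite. Then for any t > 0, P(|(1/(mn))·Σ_{i=1}^m Σ_{j=1}^n |x_j A_{ij}|^p − μ²| ≥ t) ≤ σ²·(σ² + (m+1)μ²)/(m n t²). -/

import Mathlib

open Finset MeasureTheory ProbabilityTheory

/-- Chebyshev bound: `(1/(mn)) ∑_{i,j} |x_j A_{ij}|^p` concentrates around `μ²`
with deviation probability at most `σ²(σ² + (m+1)μ²)/(m n t²)`. -/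
theorem stmt_14 {Ω : Type*} [MeasurableSpace Ω] (P : Measure Ω) [IsProbabilityMeasure P]
    {m n : ℕ} [NeZero m] [NeZero n] (p : ℝ) (hp : 1 ≤ p)
    (x : Fin n → Ω → ℝ) (A : Fin m → Fin n → Ω → ℝ) (μp σ2 : ℝ)
    (hmx : ∀ j, Measurable (x j)) (hmA : ∀ i j, Measurable (A i j))
    (hindep : iIndepFun
      (Sum.elim x (fun ij : Fin m × Fin n => A ij.1 ij.2)) P)
    (hident : ∀ k : Fin n ⊕ (Fin m × Fin n),
      IdentDistrib (Sum.elim x (fun ij : Fin m × Fin n => A ij.1 ij.2) k) (x 0) P P)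
    (hL2 : MemLp (fun ω => |x 0 ω| ^ p) 2 P)
    (hmom : ∫ ω, |x 0 ω| ^ p ∂P = μp)
    (hvar : variance (fun ω => |x 0 ω| ^ p) P = σ2)
    (t : ℝ) (ht : 0 < t) :
    P {ω | t ≤ |(1 / ((m : ℝ) * n)) * (∑ i, ∑ j, |x j ω * A i j ω| ^ p) - μp ^ 2|}
      ≤ ENNReal.ofReal (σ2 * (σ2 + ((m : ℝ) + 1) * μp ^ 2) / ((m : ℝ) * n * t ^ 2)) := by
  classical
  have hm0 : ((m : ℝ)) ≠ 0 := Nat.cast_ne_zero.2 (NeZero.ne m)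
  have hn0 : ((n : ℝ)) ≠ 0 := Nat.cast_ne_zero.2 (NeZero.ne n)
  have hmn : ((m : ℝ) * n) ≠ 0 := mul_ne_zero hm0 hn0
  set F := Sum.elim x (fun ij : Fin m × Fin n => A ij.1 ij.2) with hF
  have hφ : Measurable fun a : ℝ => |a| ^ p := measurable_id.abs.pow_const p
  set Y0 : Ω → ℝ := fun ω => |x 0 ω| ^ p with hY0
  set W : (Fin n ⊕ Fin m × Fin n) → Ω → ℝ :=
    fun k => (fun a : ℝ => |a| ^ p) ∘ F k with hWdef
  have hWm : ∀ k, Measurable (W k) := by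
    rintro (j | q)
    · exact hφ.comp (hmx j)
    · exact hφ.comp (hmA q.1 q.2)
  have hWindep : iIndepFun W P :=
    hindep.comp _ (fun _ => hφ)
  have hid : ∀ k, IdentDistrib (W k) Y0 P P := fun k => (hident k).comp hφ
  have memW : ∀ k, MemLp (W k) 2 P := fun k => (hid k).memLp_iff.2 hL2
  have intW : ∀ k, Integrable (W k) P := fun k => (memW k).integrable one_le_two
  have intW2 : ∀ k, Integrable (fun ω => W k ω ^ 2) P := by
    intro k
    have := (memW k).integrable_sq
    simpa [sq] using this
  have hEW : ∀ k, ∫ ω, W k ω ∂P = μp := fun k => ((hid k).integral_eq).trans hmom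
  have hEY2 : ∫ ω, Y0 ω ^ 2 ∂P = σ2 + μp ^ 2 := by
    have hv := variance_eq_sub hL2
    rw [hvar] at hv
    have h1 : (∫ ω, ((fun ω => |x 0 ω| ^ p) ^ 2) ω ∂P) = ∫ ω, Y0 ω ^ 2 ∂P := by
      simp [Pi.pow_apply, hY0]
    rw [h1] at hv
    rw [hmom] at hv
    linarith
  have hEW2 : ∀ k, ∫ ω, W k ω ^ 2 ∂P = σ2 + μp ^ 2 := by
    intro k
    have h2 : IdentDistrib (fun ω => W k ω ^ 2) (fun ω => Y0 ω ^ 2) P P :=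
      (hid k).comp (measurable_id.pow_const 2)
    exact h2.integral_eq.trans hEY2
  -- the terms
  set T : Fin m × Fin n → Ω → ℝ :=
    fun q => W (Sum.inl q.2) * W (Sum.inr q) with hT
  have hTm : ∀ q, Measurable (T q) := fun q => (hWm _).mul (hWm _)
  have hindT : ∀ q : Fin m × Fin n, IndepFun (W (Sum.inl q.2)) (W (Sum.inr q)) P :=
    fun q => hWindep.indepFun (by simp)
  have hTint : ∀ q, Integrable (T q) P :=
    fun q => (hindT q).integrable_mul (intW _) (intW _)
  have hET : ∀ q, ∫ ω, T q ω ∂P = μp ^ 2 := by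
    intro q
    have := (hindT q).integral_mul_eq_mul_integral (intW _).aestronglyMeasurable (intW _).aestronglyMeasurable
    simpa [hT, hEW, sq] using this
  have hTsqI : ∀ q : Fin m × Fin n,
      IndepFun (fun ω => W (Sum.inl q.2) ω ^ 2) (fun ω => W (Sum.inr q) ω ^ 2) P :=
    fun q => (hindT q).comp (measurable_id.pow_const 2) (measurable_id.pow_const 2)
  have hTsqint : ∀ q, Integrable (fun ω => T q ω ^ 2) P := by
    intro q
    have h := (hTsqI q).integrable_mul (intW2 _) (intW2 _)
    have : (fun ω => T q ω ^ 2)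
        = ((fun ω => W (Sum.inl q.2) ω ^ 2) * (fun ω => W (Sum.inr q) ω ^ 2)) := by
      funext ω; simp [hT]; ring
    rwa [this]
  have hTL2 : ∀ q, MemLp (T q) 2 P := by
    intro q
    refine (memLp_two_iff_integrable_sq (hTm q).aestronglyMeasurable).2 ?_
    simpa [sq] using hTsqint q
  -- key cross moments
  have key : ∀ q q' : Fin m × Fin n, Integrable (fun ω => T q ω * T q' ω) P ∧
      ∫ ω, T q ω * T q' ω ∂P =
        μp ^ 4 + (if q.2 = q'.2 then σ2 * μp ^ 2 else 0)
          + (if q = q' then σ2 * (σ2 + μp ^ 2) else 0) := by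
    rintro ⟨i, j⟩ ⟨i', j'⟩
    by_cases hj : j = j'
    · subst hj
      by_cases hi : i = i'
      · subst hi
        -- same term: T² = Wl² * Wr²
        have heq : (fun ω => T (i, j) ω * T (i, j) ω)
            = ((fun ω => W (Sum.inl j) ω ^ 2) * (fun ω => W (Sum.inr (i, j)) ω ^ 2)) := by
          funext ω; simp [hT]; ring
        constructor
        · rw [heq]; exact (hTsqI (i, j)).integrable_mul (intW2 _) (intW2 _)
        · have := (hTsqI (i, j)).integral_mul_eq_mul_integral (intW2 _).aestronglyMeasurable (intW2 _).aestronglyMeasurable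
          rw [show (fun ω => T (i, j) ω * T (i, j) ω) = ((fun ω => W (Sum.inl (i,j).2) ω ^ 2) * (fun ω => W (Sum.inr (i,j)) ω ^ 2)) from heq, this, hEW2, hEW2]
          simp; ring
      · -- same column, different row
        have hI : IndepFun (W (Sum.inl j) * W (Sum.inl j))
            (W (Sum.inr (i, j)) * W (Sum.inr (i', j))) P := by
          refine hWindep.indepFun_mul_mul hWm _ _ _ _ (by simp) (by simp) (by simp) (by simp)
        have hI2 : IndepFun (W (Sum.inr (i, j))) (W (Sum.inr (i', j))) P :=
          hWindep.indepFun (by simp [hi])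
        have hint1 : Integrable (W (Sum.inl j) * W (Sum.inl j)) P := by
          have := intW2 (Sum.inl j)
          show Integrable (fun ω => W (Sum.inl j) ω * W (Sum.inl j) ω) P
          simpa [sq, Pi.mul_apply] using this
        have hint2 : Integrable (W (Sum.inr (i, j)) * W (Sum.inr (i', j))) P :=
          hI2.integrable_mul (intW _) (intW _)
        have heq : (fun ω => T (i, j) ω * T (i', j) ω)
            = ((W (Sum.inl j) * W (Sum.inl j)) * (W (Sum.inr (i, j)) * W (Sum.inr (i', j)))) := by
          funext ω; simp [hT]; ring
        constructor
        · rw [heq]; exact hI.integrable_mul hint1 hint2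
        · have h3 := hI.integral_mul_eq_mul_integral hint1.aestronglyMeasurable hint2.aestronglyMeasurable
          have h4 := hI2.integral_mul_eq_mul_integral (intW _).aestronglyMeasurable (intW _).aestronglyMeasurable
          have h5 : ∫ ω, (W (Sum.inl j) * W (Sum.inl j)) ω ∂P = σ2 + μp ^ 2 := by
            simpa [sq, Pi.mul_apply] using hEW2 (Sum.inl j)
          rw [heq, h3, h5]
          rw [show (∫ ω, (W (Sum.inr (i, j)) * W (Sum.inr (i', j))) ω ∂P)
            = μp * μp from h4.trans (by rw [hEW, hEW])]
          simp [hi, Prod.ext_iff]; ring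
    · -- different columns: fully independent
      have hI : IndepFun (W (Sum.inl j) * W (Sum.inr (i, j)))
          (W (Sum.inl j') * W (Sum.inr (i', j'))) P := by
        refine hWindep.indepFun_mul_mul hWm _ _ _ _ (by simp [hj]) (by simp)
          (by simp) (by simp [Prod.ext_iff, hj])
      have heq : (fun ω => T (i, j) ω * T (i', j') ω)
          = ((W (Sum.inl j) * W (Sum.inr (i, j))) * (W (Sum.inl j') * W (Sum.inr (i', j')))) := by
        funext ω; simp [hT]
      constructor
      · rw [heq]; exact hI.integrable_mul (hTint (i, j)) (hTint (i', j'))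
      · have h3 := hI.integral_mul_eq_mul_integral (hTint (i, j)).aestronglyMeasurable (hTint (i', j')).aestronglyMeasurable
        rw [heq, h3]
        rw [show (∫ ω, (W (Sum.inl j) * W (Sum.inr (i, j))) ω ∂P) = μp ^ 2 from hET (i, j)]
        rw [show (∫ ω, (W (Sum.inl j') * W (Sum.inr (i', j'))) ω ∂P) = μp ^ 2 from hET (i', j')]
        simp [hj, Prod.ext_iff]; ring
  -- the sum
  set S : Ω → ℝ := fun ω => ∑ q : Fin m × Fin n, T q ω with hS
  set c : ℝ := 1 / ((m : ℝ) * n) with hc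
  set Sc : Ω → ℝ := fun ω => c * S ω with hSc
  have hScL2 : MemLp Sc 2 P := by
    have : MemLp S 2 P := memLp_finset_sum univ (fun q _ => hTL2 q)
    exact this.const_mul c
  have hES : ∫ ω, S ω ∂P = ((m : ℝ) * n) * μp ^ 2 := by
    rw [hS]
    rw [integral_finset_sum _ (fun q _ => hTint q)]
    simp [hET, card_univ, mul_comm]
  have hESc : ∫ ω, Sc ω ∂P = μp ^ 2 := by
    rw [hSc]
    rw [integral_const_mul, hES, hc]
    field_simp
  have hSsq : ∫ ω, S ω ^ 2 ∂P
      = ((m : ℝ) * n) ^ 2 * μp ^ 4 + (m : ℝ) ^ 2 * n * (σ2 * μp ^ 2)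
        + ((m : ℝ) * n) * (σ2 * (σ2 + μp ^ 2)) := by
    have hexp : ∀ ω, S ω ^ 2 = ∑ q : Fin m × Fin n, ∑ q' : Fin m × Fin n, T q ω * T q' ω := by
      intro ω; rw [hS, sq, Finset.sum_mul_sum]
    simp_rw [hexp]
    rw [integral_finset_sum _ (fun q _ => integrable_finset_sum _ (fun q' _ => (key q q').1))]
    have : ∀ q : Fin m × Fin n, ∫ ω, ∑ q' : Fin m × Fin n, T q ω * T q' ω ∂P
        = ∑ q' : Fin m × Fin n, (μp ^ 4 + (if q.2 = q'.2 then σ2 * μp ^ 2 else 0)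
            + (if q = q' then σ2 * (σ2 + μp ^ 2) else 0)) := by
      intro q
      rw [integral_finset_sum _ (fun q' _ => (key q q').1)]
      exact Finset.sum_congr rfl fun q' _ => (key q q').2
    simp_rw [this]
    have e1 : ∀ q : Fin m × Fin n,
        ∑ q' : Fin m × Fin n, (if q.2 = q'.2 then σ2 * μp ^ 2 else 0)
          = (m : ℝ) * (σ2 * μp ^ 2) := by
      intro q
      rw [Fintype.sum_prod_type]
      simp [Finset.sum_ite_eq]
    have e2 : ∀ q : Fin m × Fin n,
        ∑ q' : Fin m × Fin n, (if q = q' then σ2 * (σ2 + μp ^ 2) else 0)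
          = σ2 * (σ2 + μp ^ 2) := by
      intro q; simp [Finset.sum_ite_eq]
    simp only [Finset.sum_add_distrib, Finset.sum_const, card_univ, Fintype.card_prod,
      Fintype.card_fin, nsmul_eq_mul, e1, e2]
    push_cast
    ring
  have hVar : variance Sc P = σ2 * (σ2 + ((m : ℝ) + 1) * μp ^ 2) / ((m : ℝ) * n) := by
    rw [variance_eq_sub hScL2]
    have h1 : (∫ ω, (Sc ^ 2) ω ∂P) = c ^ 2 * ∫ ω, S ω ^ 2 ∂P := by
      rw [← integral_const_mul]
      congr 1; funext ω; simp [hSc]; ring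
    have h2 : (∫ ω, Sc ω ∂P) = μp ^ 2 := hESc
    calc (∫ ω, (Sc ^ 2) ω ∂P) - (∫ ω, Sc ω ∂P) ^ 2
        = c ^ 2 * (∫ ω, S ω ^ 2 ∂P) - (μp ^ 2) ^ 2 := by rw [h1, h2]
      _ = σ2 * (σ2 + ((m : ℝ) + 1) * μp ^ 2) / ((m : ℝ) * n) := by
          rw [hSsq, hc]; field_simp; ring
  have cheb := meas_ge_le_variance_div_sq (μ := P) hScL2 ht
  have hset : {ω | t ≤ |(1 / ((m : ℝ) * n)) * (∑ i, ∑ j, |x j ω * A i j ω| ^ p) - μp ^ 2|}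
      = {ω | t ≤ |Sc ω - P[Sc]|} := by
    ext ω
    have hptwise : (∑ i, ∑ j, |x j ω * A i j ω| ^ p) = S ω := by
      rw [show S ω = ∑ q : Fin m × Fin n, T q ω from rfl, Fintype.sum_prod_type]
      refine Finset.sum_congr rfl fun i _ => Finset.sum_congr rfl fun j _ => ?_
      simp only [hT, Pi.mul_apply, hWdef, Function.comp_apply, hF, Sum.elim_inl, Sum.elim_inr]
      rw [abs_mul, Real.mul_rpow (abs_nonneg _) (abs_nonneg _)]
    simp only [Set.mem_setOf_eq]
    rw [show P[Sc] = μp ^ 2 from hESc, hptwise]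
  rw [hset]
  refine cheb.trans_eq ?_
  congr 1
  rw [hVar]
  rw [div_div]
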